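/- Let c > 0 be a real number and let n ≥ 1, s ≥ 0 be integers such that p^{s−n+1}·v(p) > c. Let W_n(θ_s) : W_n(R) → W_n(O/p) be the ring homomorphism of length-n p-typical Witt vectors induced by θ_s, and let J ⊆ W_n(O/p) be the ideal generated by the Teichmüller representatives [ȳ] of classes ȳ ∈ O/p of elements y ∈ O with v(y) > c/p^s. Then the composite W_n(R) → W_n(O/p) → W_n(O/p)/J is surjective with kernel equal to [𝔞_R^{>c}], the ideal of W_n(R) generated by the Teichmüller representatives of elements x ∈ R with v_R(x) > c; hence it induces a ring isomorphism W_n(R)/[𝔞_R^{>c}] ≅ W_n(O/p)/J. -/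

import Mathlib

/-!
Statement 9 (Proposition 2.9 of Caruso–Liu).  `K` is an algebraically closed field with
an additive valuation `v` with `0 < v p < ∞`, `O` its valuation ring,
`R = lim_{x↦x^p} O/p` the tilt with its valuation `v_R`, and `θ_s : R → O/p` the `s`-th
projection.  If `p^{s-n+1}·v(p) > c > 0` then the composite
`W_n(R) → W_n(O/p) → W_n(O/p)/J` induced by `θ_s` — where `J` is the ideal generated by
Teichmüller representatives `[ȳ]` of classes of elements `y ∈ O` with `v y > c/p^s` —
is surjective with kernel `[𝔞_R^{>c}]`, hence induces a ring isomorphism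
`W_n(R)/[𝔞_R^{>c}] ≅ W_n(O/p)/J`.
-/

set_option maxHeartbeats 1000000
set_option synthInstance.maxHeartbeats 400000

noncomputable section

namespace TiltAux

open WittVector Finset

variable {p : ℕ} [hp : Fact p.Prime]

lemma teichmuller_mul_invertible {B : Type*} [CommRing B] [Invertible (p : B)]
    (a : B) (z : WittVector p B) :
    teichmuller p a * z = WittVector.mk p fun i => a ^ p ^ i * z.coeff i := by
  apply (ghostMap.bijective_of_invertible p B).injective
  funext n
  rw [map_mul]
  simp only [Pi.mul_apply, ghostMap_apply]
  rw [ghostComponent_teichmuller]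
  simp only [ghostComponent_apply, aeval_wittPolynomial, WittVector.coeff_mk]
  rw [Finset.mul_sum]
  refine Finset.sum_congr rfl fun i hi => ?_
  rw [mul_pow, ← pow_mul, ← pow_add, Nat.add_sub_cancel' (Finset.mem_range_succ_iff.mp hi)]
  ring

lemma teichmuller_mul_coeff {A : Type*} [CommRing A] (a : A) (z : WittVector p A) (i : ℕ) :
    (teichmuller p a * z).coeff i = a ^ p ^ i * z.coeff i := by
  classical
  have hZ : (teichmuller p (MvPolynomial.X (none : Option ℕ)) *
      WittVector.mk p fun k => MvPolynomial.X (some k) :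
        WittVector p (MvPolynomial (Option ℕ) ℤ))
      = WittVector.mk p fun k =>
          MvPolynomial.X none ^ p ^ k * MvPolynomial.X (some k) := by
    have hinj : Function.Injective
        (WittVector.map (MvPolynomial.map (Int.castRingHom ℚ)) :
          WittVector p (MvPolynomial (Option ℕ) ℤ) → WittVector p (MvPolynomial (Option ℕ) ℚ)) :=
      WittVector.map_injective _ (MvPolynomial.map_injective _ Int.cast_injective)
    apply hinj
    rw [map_mul, map_teichmuller]
    have h1 : WittVector.map (MvPolynomial.map (Int.castRingHom ℚ))
        (WittVector.mk p fun k => (MvPolynomial.X (some k) : MvPolynomial (Option ℕ) ℤ))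
        = WittVector.mk p fun k => (MvPolynomial.X (some k) : MvPolynomial (Option ℕ) ℚ) := by
      apply WittVector.ext; intro k
      simp [WittVector.map_coeff, WittVector.coeff_mk]
    rw [h1, MvPolynomial.map_X, teichmuller_mul_invertible]
    apply WittVector.ext; intro k
    simp [WittVector.map_coeff, WittVector.coeff_mk]
  let f : MvPolynomial (Option ℕ) ℤ →+* A :=
    (MvPolynomial.aeval fun o : Option ℕ => o.elim a z.coeff).toRingHom
  have hfa : f (MvPolynomial.X none) = a := by simp [f]
  have hfz : WittVector.map f (WittVector.mk p fun k => MvPolynomial.X (some k)) = z := by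
    apply WittVector.ext; intro k
    simp [f, WittVector.map_coeff, WittVector.coeff_mk]
  calc (teichmuller p a * z).coeff i
      = (WittVector.map f (teichmuller p (MvPolynomial.X none) *
          WittVector.mk p fun k => MvPolynomial.X (some k))).coeff i := by
        rw [map_mul, map_teichmuller, hfa, hfz]
    _ = (WittVector.map f (WittVector.mk p fun k =>
          MvPolynomial.X none ^ p ^ k * MvPolynomial.X (some k))).coeff i := by rw [hZ]
    _ = a ^ p ^ i * z.coeff i := by
        rw [WittVector.map_coeff, WittVector.coeff_mk]
        simp [f]


section SpanLemma

variable {A : Type*} [CommRing A] [CharP A p]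

lemma frobenius_teichmuller_charP (r : A) :
    WittVector.frobenius (WittVector.teichmuller p r) = WittVector.teichmuller p (r ^ p) := by
  apply WittVector.ext; intro k
  rw [WittVector.coeff_frobenius_charP]
  cases k with
  | zero => rw [WittVector.teichmuller_coeff_zero, WittVector.teichmuller_coeff_zero]
  | succ k =>
      rw [WittVector.teichmuller_coeff_pos p r _ (Nat.succ_pos k),
        WittVector.teichmuller_coeff_pos p _ _ (Nat.succ_pos k), zero_pow hp.out.ne_zero]

omit [CharP A p] in
lemma truncate_out' {n : ℕ} (x : TruncatedWittVector p n A) :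
    WittVector.truncate n x.out = x :=
  TruncatedWittVector.truncateFun_out x

lemma verschiebung_truncate_mem_span {n : ℕ} (Tg Tg' : Set A)
    (hroot : ∀ b ∈ Tg, ∃ r ∈ Tg', r ^ p = b) (y : WittVector p A)
    (hy : WittVector.truncate n y ∈
      Ideal.span {z | ∃ a ∈ Tg, z = WittVector.truncate n (WittVector.teichmuller p a)}) :
    WittVector.truncate (n + 1) (WittVector.verschiebung y) ∈
      Ideal.span {z | ∃ a ∈ Tg', z = WittVector.truncate (n + 1) (WittVector.teichmuller p a)} := by
  classical
  obtain ⟨m, f, g, hsum⟩ := Submodule.mem_span_set'.mp hy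
  have hg : ∀ i : Fin m, ∃ a ∈ Tg, (g i : TruncatedWittVector p n A)
      = WittVector.truncate n (WittVector.teichmuller p a) := fun i => (g i).2
  choose a ha hga using hg
  choose r hr hra using fun i => hroot (a i) (ha i)
  have htr : WittVector.truncate n (∑ i, (f i).out * WittVector.teichmuller p (a i))
      = WittVector.truncate n y := by
    rw [map_sum, ← hsum]
    refine Finset.sum_congr rfl fun i _ => ?_
    rw [map_mul, truncate_out', ← hga i, smul_eq_mul]
  have hker : ∀ j, j < n →
      (y - ∑ i, (f i).out * WittVector.teichmuller p (a i)).coeff j = 0 := by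
    intro j hj
    have h0 : WittVector.truncate n
        (y - ∑ i, (f i).out * WittVector.teichmuller p (a i)) = 0 := by
      rw [map_sub, htr, sub_self]
    exact (WittVector.mem_ker_truncate n _).mp (by rwa [RingHom.mem_ker]) j hj
  have hy' : y = (∑ i, (f i).out * WittVector.teichmuller p (a i))
      + (y - ∑ i, (f i).out * WittVector.teichmuller p (a i)) := by ring
  have hVF : ∀ i : Fin m,
      WittVector.verschiebung ((f i).out * WittVector.teichmuller p (a i))
        = WittVector.verschiebung ((f i).out) * WittVector.teichmuller p (r i) := by
    intro i
    conv_lhs => rw [← hra i, ← frobenius_teichmuller_charP (r i)]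
    exact WittVector.verschiebung_mul_frobenius _ _
  have hVk : WittVector.truncate (n + 1) (WittVector.verschiebung
      (y - ∑ i, (f i).out * WittVector.teichmuller p (a i))) = 0 := by
    rw [← RingHom.mem_ker, WittVector.mem_ker_truncate]
    intro i hi
    cases i with
    | zero => exact WittVector.verschiebung_coeff_zero _
    | succ i => rw [WittVector.verschiebung_coeff_succ]; exact hker i (by omega)
  have hsplit : WittVector.verschiebung y
      = WittVector.verschiebung (∑ i, (f i).out * WittVector.teichmuller p (a i))
        + WittVector.verschiebung
            (y - ∑ i, (f i).out * WittVector.teichmuller p (a i)) := by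
    rw [← map_add]; exact congrArg _ hy'
  rw [hsplit, map_add, hVk, add_zero, map_sum, map_sum]
  refine Ideal.sum_mem _ fun i _ => ?_
  rw [hVF i, map_mul]
  exact Ideal.mul_mem_left _ _ (Ideal.subset_span ⟨r i, hr i, rfl⟩)

lemma truncate_mem_span_teichmuller (T : ℝ → Set A) (c : ℝ) (hc : 0 ≤ c)
    (hroot : ∀ u : ℝ, c ≤ u → ∀ a ∈ T ((p : ℝ) * u), ∃ r ∈ T u, r ^ p = a) :
    ∀ (n : ℕ) (u : ℝ), c ≤ u → ∀ w : WittVector p A,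
      (∀ i, i < n → w.coeff i ∈ T ((p : ℝ) ^ i * u)) →
      WittVector.truncate n w ∈
        Ideal.span {z | ∃ a ∈ T u, z = WittVector.truncate n (WittVector.teichmuller p a)} := by
  intro n
  induction n with
  | zero =>
      intro u hu w hw
      haveI : Subsingleton (TruncatedWittVector p 0 A) :=
        ⟨fun a b => TruncatedWittVector.ext fun i => i.elim0⟩
      rw [Subsingleton.elim (WittVector.truncate 0 w) 0]
      exact Ideal.zero_mem _
  | succ n ih =>
      intro u hu w hw
      have hp1 : (1 : ℝ) ≤ (p : ℝ) := by exact_mod_cast hp.out.one_lt.le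
      have hu0 : 0 ≤ u := le_trans hc hu
      -- decomposition w = WittVector.teichmuller w₀ + V y
      set y : WittVector p A := WittVector.mk p fun j => w.coeff (j + 1) with hy
      have hdec : w = WittVector.teichmuller p (w.coeff 0) + WittVector.verschiebung y := by
        have h1 : WittVector.init 1 w = WittVector.teichmuller p (w.coeff 0) := by
          apply WittVector.ext; intro j
          rw [WittVector.init, WittVector.coeff_select]
          simp only [WittVector.selectPoly]
          cases j with
          | zero =>
              rw [if_pos (by omega : (0:ℕ) < 1), MvPolynomial.aeval_X,
                WittVector.teichmuller_coeff_zero]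
          | succ j =>
              rw [if_neg (by omega : ¬ (j + 1 < 1)), map_zero,
                WittVector.teichmuller_coeff_pos p _ _ (Nat.succ_pos j)]
        have h2 : WittVector.tail 1 w = WittVector.verschiebung y := by
          apply WittVector.ext; intro j
          rw [WittVector.tail, WittVector.coeff_select]
          simp only [WittVector.selectPoly]
          cases j with
          | zero =>
              rw [if_neg (by omega : ¬ (1 ≤ 0)), map_zero,
                WittVector.verschiebung_coeff_zero]
          | succ j =>
              rw [if_pos (by omega : 1 ≤ j + 1), MvPolynomial.aeval_X,
                WittVector.verschiebung_coeff_succ, hy, WittVector.coeff_mk]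
        rw [← h1, ← h2, WittVector.init_add_tail]
      have hyc : ∀ j, j < n → y.coeff j ∈ T ((p : ℝ) ^ j * ((p : ℝ) * u)) := by
        intro j hj
        rw [hy, WittVector.coeff_mk]
        have := hw (j + 1) (by omega)
        have hexp : (p : ℝ) ^ (j + 1) * u = (p : ℝ) ^ j * ((p : ℝ) * u) := by ring
        rwa [hexp] at this
      have hVy := verschiebung_truncate_mem_span (T ((p : ℝ) * u)) (T u)
        (hroot u hu) y (ih ((p : ℝ) * u) (le_trans hu (le_mul_of_one_le_left hu0 hp1)) y hyc)
      have h0 : WittVector.truncate (n + 1) (WittVector.teichmuller p (w.coeff 0)) ∈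
          Ideal.span {z | ∃ a ∈ T u, z = WittVector.truncate (n + 1) (WittVector.teichmuller p a)} := by
        refine Ideal.subset_span ⟨w.coeff 0, ?_, rfl⟩
        have := hw 0 (Nat.succ_pos n)
        rwa [pow_zero, one_mul] at this
      rw [hdec, map_add]
      exact Ideal.add_mem _ h0 hVy

end SpanLemma

end TiltAux


/-- The axioms for an additive valuation on a field `K`, with `0 < v p < ∞`. -/
structure ValAx (p : ℕ) (K : Type*) [Field K] (v : K → WithTop ℝ) : Prop where
  map_mul : ∀ x y : K, v (x * y) = v x + v y
  min_le_map_add : ∀ x y : K, min (v x) (v y) ≤ v (x + y)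
  top_iff : ∀ x : K, v x = ⊤ ↔ x = 0
  vp_pos : 0 < v (p : K)
  vp_ne_top : v (p : K) ≠ ⊤

namespace Tilt

variable {p : ℕ} {K : Type*} [Field K] {v : K → WithTop ℝ}

theorem v_one_eq_zero (hv : ValAx p K v) : v 1 = 0 := by
  have h : v 1 = v 1 + v 1 := by
    conv_lhs => rw [show (1 : K) = 1 * 1 by ring]
    exact hv.map_mul 1 1
  have hne : v 1 ≠ ⊤ := fun h' => one_ne_zero ((hv.top_iff 1).1 h')
  obtain ⟨r, hr⟩ := WithTop.ne_top_iff_exists.mp hne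
  rw [← hr] at h
  rw [← hr]
  norm_cast at h ⊢
  linarith

theorem v_neg (hv : ValAx p K v) (x : K) : v (-x) = v x := by
  have hm1 : v (-1 : K) = 0 := by
    have h : v (-1 : K) + v (-1 : K) = 0 := by
      rw [← hv.map_mul]; norm_num [v_one_eq_zero hv]
    rcases eq_or_ne (v (-1 : K)) ⊤ with h' | h'
    · rw [h'] at h; simp at h
    · obtain ⟨r, hr⟩ := WithTop.ne_top_iff_exists.mp h'
      rw [← hr] at h ⊢; norm_cast at h ⊢; linarith
  calc v (-x) = v ((-1) * x) := by ring_nf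
  _ = v (-1 : K) + v x := hv.map_mul _ _
  _ = v x := by rw [hm1, zero_add]

/-- The valuation ring `O = {x ∈ K : v x ≥ 0}`. -/
def O (p : ℕ) (v : K → WithTop ℝ) (hv : ValAx p K v) : Subring K where
  carrier := {x | 0 ≤ v x}
  one_mem' := le_of_eq (v_one_eq_zero hv).symm
  mul_mem' := fun {x y} hx hy => by
    simpa only [Set.mem_setOf_eq, hv.map_mul] using add_nonneg hx hy
  zero_mem' := by simp only [Set.mem_setOf_eq, (hv.top_iff 0).2 rfl]; exact le_top
  add_mem' := fun {x y} hx hy => le_trans (le_min hx hy) (hv.min_le_map_add x y)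
  neg_mem' := fun {x} hx => by simpa only [Set.mem_setOf_eq, v_neg hv] using hx

/-- The ideal `pO` of `O`. -/
def pIdeal (p : ℕ) (v : K → WithTop ℝ) (hv : ValAx p K v) : Ideal (O p v hv) :=
  Ideal.span {(p : O p v hv)}

theorem pIdeal_ne_top (hv : ValAx p K v) : pIdeal p v hv ≠ ⊤ := by
  intro h
  rw [Ideal.eq_top_iff_one, pIdeal, Ideal.mem_span_singleton] at h
  obtain ⟨a, ha⟩ := h
  have ha' : (1 : K) = (p : K) * (a : K) := by
    have := congrArg (fun z : O p v hv => (z : K)) ha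
    push_cast at this
    exact this
  have h0 : (0 : WithTop ℝ) = v ((p : K) * (a : K)) := by
    rw [← ha', v_one_eq_zero hv]
  rw [hv.map_mul] at h0
  have : (0 : WithTop ℝ) < v (p : K) + v (a : K) :=
    lt_of_lt_of_le hv.vp_pos (le_add_of_nonneg_right a.2)
  rw [← h0] at this
  exact lt_irrefl _ this

theorem charP_quotient (hv : ValAx p K v) [Fact p.Prime] :
    CharP (O p v hv ⧸ pIdeal p v hv) p := by
  haveI : Nontrivial (O p v hv ⧸ pIdeal p v hv) :=
    Ideal.Quotient.nontrivial_iff.mpr (pIdeal_ne_top hv)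
  refine (CharP.charP_iff_prime_eq_zero Fact.out).2 ?_
  rw [← map_natCast (Ideal.Quotient.mk (pIdeal p v hv))]
  exact Ideal.Quotient.eq_zero_iff_mem.2 (Ideal.mem_span_singleton_self _)

/-- The tilt `R = lim_{x ↦ x^p} O/p`, as a subring of the product ring
`ℕ → O/p`: sequences `(x⁽⁰⁾, x⁽¹⁾, …)` with `(x⁽ˢ⁺¹⁾)^p = x⁽ˢ⁾`. -/
def tilt (p : ℕ) [Fact p.Prime] (v : K → WithTop ℝ) (hv : ValAx p K v) :
    Subring (ℕ → (O p v hv ⧸ pIdeal p v hv)) where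
  carrier := {f | ∀ s : ℕ, f (s + 1) ^ p = f s}
  one_mem' := fun s => one_pow p
  mul_mem' := fun {f g} hf hg s => by
    simp only [Pi.mul_apply, mul_pow, hf s, hg s]
  zero_mem' := fun s => zero_pow (Fact.out (p := p.Prime)).ne_zero
  add_mem' := fun {f g} hf hg s => by
    haveI := charP_quotient hv
    simp only [Pi.add_apply, add_pow_char, hf s, hg s]
  neg_mem' := fun {f} hf s => by
    haveI := charP_quotient hv
    rw [Pi.neg_apply, Pi.neg_apply, show -f (s + 1) = -1 * f (s + 1) by ring, mul_pow,
      neg_one_pow_char, hf s]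
    ring

variable (p) [Fact p.Prime] (v)

/-- The `s`-th projection `θ_s : R → O/p`, `x ↦ x⁽ˢ⁾`. -/
def theta (hv : ValAx p K v) (s : ℕ) :
    tilt p v hv →+* (O p v hv ⧸ pIdeal p v hv) :=
  (Pi.evalRingHom _ s).comp (tilt p v hv).subtype

/-- The valuation `v_R` of the tilt: `v_R x = lim_s p^s · v(x̂⁽ˢ⁾)` where `x̂⁽ˢ⁾` is any
lift of `x⁽ˢ⁾` to `O` (the sequence `p^s · min (v x̂⁽ˢ⁾) (v p)` is nondecreasing and
independent of the choice of lifts, and its limit is its supremum). -/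
def vR (hv : ValAx p K v) (x : tilt p v hv) : WithTop ℝ :=
  ⨆ s : ℕ, ((((p : ℝ) ^ s : ℝ)) : WithTop ℝ) *
    min (v ((Function.surjInv Ideal.Quotient.mk_surjective (x.val s) : O p v hv) : K))
        (v (p : K))

/-- The ideal `𝔞 = {x ∈ O : v x > t}` of `O`. -/
def oIdealGT (hv : ValAx p K v) (t : ℝ) : Ideal (O p v hv) where
  carrier := {x | (t : WithTop ℝ) < v ↑x}
  add_mem' := fun {x y} hx hy =>
    lt_of_lt_of_le (lt_min hx hy) (by push_cast; exact hv.min_le_map_add x y)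
  zero_mem' := by
    show (t : WithTop ℝ) < v ((0 : O p v hv) : K)
    push_cast
    rw [(hv.top_iff 0).2 rfl]
    exact WithTop.coe_lt_top t
  smul_mem' := fun a x hx => by
    show (t : WithTop ℝ) < v ((a * x : O p v hv) : K)
    push_cast
    rw [hv.map_mul]
    exact lt_of_lt_of_le hx (le_add_of_nonneg_left a.2)

/-- Since `v p > c/p^s`, the ideal `𝔞 = {v > c/p^s}` contains `p`,
so `pO ≤ 𝔞` and the projection `O/p → O/𝔞` is defined. -/
theorem pIdeal_le_oIdealGT (hv : ValAx p K v) (c : ℝ) (s : ℕ)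
    (hs : (c : WithTop ℝ) < (((p : ℝ) ^ s : ℝ) : WithTop ℝ) * v (p : K)) :
    pIdeal p v hv ≤ oIdealGT p v hv (c / p ^ s) := by
  rw [pIdeal, Ideal.span_le, Set.singleton_subset_iff]
  show ((c / p ^ s : ℝ) : WithTop ℝ) < v ((p : O p v hv) : K)
  push_cast
  rcases eq_or_ne (v (p : K)) ⊤ with h | h
  · rw [h]; exact WithTop.coe_lt_top _
  · obtain ⟨w, hw⟩ := WithTop.ne_top_iff_exists.mp h
    rw [← hw] at hs ⊢
    have hps : (0 : ℝ) < (p : ℝ) ^ s := by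
      have : (0 : ℝ) < (p : ℝ) := by
        exact_mod_cast (Fact.out (p := p.Prime)).pos
      positivity
    have hs' : c < (p : ℝ) ^ s * w := by exact_mod_cast hs
    have hgoal : c / (p : ℝ) ^ s < w := (div_lt_iff₀ hps).2 (by linarith)
    exact_mod_cast hgoal

/-- The Teichmüller representative of `y` in the truncated Witt vector ring `W_n(A)`. -/
def truncTeichmuller (p n : ℕ) [hp : Fact p.Prime] {A : Type*} [CommRing A] (y : A) :
    TruncatedWittVector p n A :=
  WittVector.truncate n (WittVector.teichmuller p y)

/-- The ring homomorphism `W_n(f) : W_n(A) → W_n(B)` induced by a ring homomorphism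
`f : A → B` (componentwise application of `f`). -/
def truncMap (p n : ℕ) [hp : Fact p.Prime] {A B : Type*} [CommRing A] [CommRing B]
    (f : A →+* B) : TruncatedWittVector p n A →+* TruncatedWittVector p n B :=
  RingHom.liftOfRightInverse (WittVector.truncate n) TruncatedWittVector.out
    TruncatedWittVector.truncateFun_out
    ⟨(WittVector.truncate n).comp (WittVector.map f), by
      intro x hx
      rw [WittVector.mem_ker_truncate] at hx
      rw [RingHom.mem_ker, RingHom.comp_apply, ← RingHom.mem_ker,
        WittVector.mem_ker_truncate]
      intro i hi
      rw [WittVector.map_coeff, hx i hi, map_zero]⟩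

variable (n : ℕ)

/-- The ideal `J` of `W_n(O/p)` generated by the Teichmüller representatives `[ȳ]` of
the classes `ȳ ∈ O/p` of elements `y ∈ O` with `v y > t`. -/
def wittOIdeal [Fact p.Prime] (hv : ValAx p K v) (t : ℝ) :
    Ideal (TruncatedWittVector p n (O p v hv ⧸ pIdeal p v hv)) :=
  Ideal.span {z | ∃ y : O p v hv, (t : WithTop ℝ) < v (y : K) ∧
    z = truncTeichmuller p n (Ideal.Quotient.mk (pIdeal p v hv) y)}

/-- The ideal `[𝔞_R^{>c}]` of `W_n(R)` generated by the Teichmüller representatives of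
elements of the tilt `R` of valuation `v_R > c`. -/
def wittTiltIdeal [Fact p.Prime] (hv : ValAx p K v) (c : ℝ) :
    Ideal (TruncatedWittVector p n (tilt p v hv)) :=
  Ideal.span {z | ∃ x : tilt p v hv, (c : WithTop ℝ) < vR p v hv x ∧
    z = truncTeichmuller p n x}


section MainLemmas

variable {p : ℕ} [hp : Fact p.Prime] {K : Type*} [Field K] {v : K → WithTop ℝ}

/-! ### Basic valuation lemmas -/

theorem v_zero_eq_top (hv : ValAx p K v) : v (0 : K) = ⊤ := (hv.top_iff 0).2 rfl

theorem v_ne_top (hv : ValAx p K v) {x : K} (hx : x ≠ 0) : v x ≠ ⊤ :=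
  fun h => hx ((hv.top_iff x).1 h)

theorem exists_v_real (hv : ValAx p K v) {x : K} (hx : x ≠ 0) : ∃ w : ℝ, v x = (w : WithTop ℝ) :=
  (WithTop.ne_top_iff_exists.mp (v_ne_top hv hx)).imp fun _ h => h.symm

theorem pK_ne_zero (hv : ValAx p K v) : (p : K) ≠ 0 :=
  fun h => hv.vp_ne_top (by rw [h]; exact v_zero_eq_top hv)

theorem exists_vp_real (hv : ValAx p K v) :
    ∃ π : ℝ, v ((p : K)) = (π : WithTop ℝ) ∧ 0 < π := by
  obtain ⟨π, hπ⟩ := exists_v_real hv (pK_ne_zero hv)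
  refine ⟨π, hπ, ?_⟩
  have := hv.vp_pos
  rw [hπ] at this
  exact_mod_cast this

theorem v_pow_real (hv : ValAx p K v) {x : K} {w : ℝ} (hw : v x = (w : WithTop ℝ)) (k : ℕ) :
    v (x ^ k) = (((k : ℝ) * w : ℝ) : WithTop ℝ) := by
  induction k with
  | zero => simpa using v_one_eq_zero hv
  | succ k ih =>
      rw [pow_succ, hv.map_mul, ih, hw, ← WithTop.coe_add]
      norm_cast
      push_cast
      ring

/-- Division in the valuation ring `O`. -/
theorem exists_factor (hv : ValAx p K v) (a b : O p v hv) (h : v (a : K) ≤ v (b : K)) :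
    ∃ q : O p v hv, b = a * q := by
  rcases eq_or_ne a 0 with rfl | ha
  · have hb : (b : K) = 0 := by
      have hb' : v (b : K) = ⊤ := top_le_iff.mp (by simpa [v_zero_eq_top hv] using h)
      exact (hv.top_iff _).1 hb'
    exact ⟨0, by ext; simp [hb]⟩
  · have haK : (a : K) ≠ 0 := fun h0 => ha (by ext; simp [h0])
    have hq : (a : K) * ((b : K) / (a : K)) = (b : K) := mul_div_cancel₀ _ haK
    have hvb : v (b : K) = v (a : K) + v ((b : K) / (a : K)) := by
      rw [← hv.map_mul, hq]
    have hmem : 0 ≤ v ((b : K) / (a : K)) := by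
      by_contra hneg
      push_neg at hneg
      have h1 : v (a : K) + v ((b : K) / (a : K)) < v (a : K) := by
        have h2 := WithTop.add_lt_add_left (v_ne_top hv haK) hneg
        simpa using h2
      rw [← hvb] at h1
      exact absurd h (not_le.mpr h1)
    refine ⟨⟨(b : K) / (a : K), hmem⟩, ?_⟩
    ext
    push_cast
    rw [hq]

/-- `k`-th roots exist in `O`. -/
theorem exists_pow_root [IsAlgClosed K] (hv : ValAx p K v) (a : O p v hv) {k : ℕ} (hk : 0 < k) :
    ∃ r : O p v hv, r ^ k = a := by
  obtain ⟨b, hb⟩ := IsAlgClosed.exists_pow_nat_eq (a : K) hk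
  rcases eq_or_ne b 0 with rfl | hb0
  · refine ⟨0, ?_⟩
    ext
    push_cast
    rw [zero_pow hk.ne', ← hb, zero_pow hk.ne']
  · obtain ⟨w, hw⟩ := exists_v_real hv hb0
    have hwk : v (b ^ k) = (((k : ℝ) * w : ℝ) : WithTop ℝ) := v_pow_real hv hw k
    have hva : 0 ≤ v (a : K) := a.2
    rw [hb] at hwk
    have hw0 : 0 ≤ w := by
      rw [hwk] at hva
      have h3 : (0 : ℝ) ≤ (k : ℝ) * w := by exact_mod_cast hva
      have hk' : (0 : ℝ) < (k : ℝ) := by exact_mod_cast hk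
      nlinarith
    refine ⟨⟨b, show (0 : WithTop ℝ) ≤ v b by rw [hw]; exact_mod_cast hw0⟩, ?_⟩
    ext
    push_cast
    exact hb

/-- There are elements of `O` with valuation in any interval `(t, m]`, `0 ≤ t < m`. -/
theorem exists_val_between [IsAlgClosed K] (hv : ValAx p K v) {t : ℝ} (ht : 0 ≤ t)
    {m : WithTop ℝ} (hm : (t : WithTop ℝ) < m) :
    ∃ μ : O p v hv, (t : WithTop ℝ) < v (μ : K) ∧ v (μ : K) ≤ m := by
  obtain ⟨π, hπ, hπ0⟩ := exists_vp_real hv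
  rcases eq_or_ne m ⊤ with rfl | hmt
  · obtain ⟨k, hk⟩ := exists_nat_gt (t / π)
    have hkt : t < (k : ℝ) * π := by
      rw [div_lt_iff₀ hπ0] at hk; linarith
    refine ⟨(p : O p v hv) ^ k, ?_, le_top⟩
    have hco : (((p : O p v hv) ^ k : O p v hv) : K) = (p : K) ^ k := by push_cast; ring
    rw [hco, v_pow_real hv hπ k]
    exact_mod_cast hkt
  · obtain ⟨mr, hmr⟩ := WithTop.ne_top_iff_exists.mp hmt
    rw [← hmr] at hm ⊢
    have htm : t < mr := by exact_mod_cast hm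
    have hdiv : t / π < mr / π := by
      apply div_lt_div_of_pos_right htm hπ0
    obtain ⟨q, hq1, hq2⟩ := exists_rat_btwn hdiv
    have hq0 : 0 < q := by
      have h0 : (0 : ℝ) ≤ t / π := div_nonneg ht hπ0.le
      exact_mod_cast lt_of_le_of_lt h0 hq1
    set a := q.num.toNat with hadef
    have ha : (a : ℝ) = (q.num : ℝ) := by
      exact_mod_cast congrArg (Int.cast : ℤ → ℝ)
        (Int.toNat_of_nonneg (le_of_lt (Rat.num_pos.mpr hq0)))
    have hb0 : 0 < q.den := q.pos
    obtain ⟨r, hr⟩ := exists_pow_root hv ((p : O p v hv) ^ a) hb0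
    have hrK : (r : K) ^ q.den = (p : K) ^ a := by
      have h4 := congrArg (fun z : O p v hv => (z : K)) hr
      push_cast at h4
      exact h4
    have hr0 : (r : K) ≠ 0 := by
      intro h0
      apply pK_ne_zero hv
      have h5 : ((p : K)) ^ a = 0 := by rw [← hrK, h0, zero_pow hb0.ne']
      exact (pow_eq_zero_iff'.mp h5).1
    obtain ⟨w, hw⟩ := exists_v_real hv hr0
    have h1 : v ((r : K) ^ q.den) = (((q.den : ℝ) * w : ℝ) : WithTop ℝ) := v_pow_real hv hw q.den
    have h2 : v ((p : K) ^ a) = (((a : ℝ) * π : ℝ) : WithTop ℝ) := v_pow_real hv hπ a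
    rw [hrK, h2] at h1
    have hweq : (a : ℝ) * π = (q.den : ℝ) * w := by exact_mod_cast h1
    have hbne : (q.den : ℝ) ≠ 0 := Nat.cast_ne_zero.mpr hb0.ne'
    have hwq : w = (q : ℝ) * π := by
      rw [Rat.cast_def]
      rw [ha] at hweq
      field_simp
      linarith [hweq]
    have hw1 : t < w := by
      rw [hwq]
      calc t = (t / π) * π := by field_simp
      _ < (q : ℝ) * π := by apply mul_lt_mul_of_pos_right hq1 hπ0
    have hw2 : w ≤ mr := by
      rw [hwq]
      have h5 : (q : ℝ) * π < (mr / π) * π := mul_lt_mul_of_pos_right hq2 hπ0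
      have h6 : (mr / π) * π = mr := by field_simp
      linarith
    exact ⟨r, by rw [hw]; exact_mod_cast hw1, by rw [hw]; exact_mod_cast hw2⟩

end MainLemmas


section TiltLemmas

variable {p : ℕ} [hp : Fact p.Prime] {K : Type*} [Field K] {v : K → WithTop ℝ}

theorem tilt_rel (hv : ValAx p K v) (x : tilt p v hv) (s : ℕ) :
    (x.val (s + 1)) ^ p = x.val s := x.2 s

theorem tilt_pow_proj (hv : ValAx p K v) (x : tilt p v hv) {s j : ℕ} (h : s ≤ j) :
    (x.val j) ^ (p ^ (j - s)) = x.val s := by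
  induction j with
  | zero =>
      have h0 : s = 0 := Nat.le_zero.mp h
      subst h0
      simp
  | succ j ih =>
      rcases Nat.lt_or_ge s (j + 1) with hlt | hge
      · have hs : s ≤ j := by omega
        have hd : j + 1 - s = (j - s) + 1 := by omega
        rw [hd, pow_succ', pow_mul, tilt_rel hv x j, ih hs]
      · have h1 : s = j + 1 := by omega
        subst h1
        simp

theorem theta_apply (hv : ValAx p K v) (s : ℕ) (x : tilt p v hv) :
    theta p v hv s x = x.val s := rfl

/-- A fixed choice of lift `O/p → O`. -/
def liftO (hv : ValAx p K v) (a : O p v hv ⧸ pIdeal p v hv) : O p v hv :=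
  Function.surjInv Ideal.Quotient.mk_surjective a

theorem mk_liftO (hv : ValAx p K v) (a : O p v hv ⧸ pIdeal p v hv) :
    Ideal.Quotient.mk (pIdeal p v hv) (liftO hv a) = a :=
  Function.surjInv_eq _ _

/-- The `s`-th term in the supremum defining `vR`. -/
def vterm (hv : ValAx p K v) (x : tilt p v hv) (s : ℕ) : WithTop ℝ :=
  ((((p : ℝ) ^ s : ℝ)) : WithTop ℝ) * min (v ((liftO hv (x.val s) : O p v hv) : K)) (v (p : K))

theorem vR_eq_iSup (hv : ValAx p K v) (x : tilt p v hv) :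
    vR p v hv x = ⨆ s : ℕ, vterm hv x s := rfl

theorem min_indep (hv : ValAx p K v) {y y' : O p v hv}
    (h : Ideal.Quotient.mk (pIdeal p v hv) y = Ideal.Quotient.mk (pIdeal p v hv) y') :
    min (v (y : K)) (v (p : K)) = min (v (y' : K)) (v (p : K)) := by
  have aux : ∀ y y' : O p v hv,
      Ideal.Quotient.mk (pIdeal p v hv) y = Ideal.Quotient.mk (pIdeal p v hv) y' →
      min (v (y : K)) (v (p : K)) ≤ min (v (y' : K)) (v (p : K)) := by
    intro y y' h
    have hmem : y' - y ∈ pIdeal p v hv := Ideal.Quotient.eq.mp h.symm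
    obtain ⟨z, hz⟩ := Ideal.mem_span_singleton.mp hmem
    have hy' : y' = y + (p : O p v hv) * z := by rw [← hz]; ring
    have h1 : min (v (y : K)) (v (((p : O p v hv) * z : O p v hv) : K)) ≤ v (y' : K) := by
      rw [hy']
      push_cast
      exact hv.min_le_map_add _ _
    have h2 : v (p : K) ≤ v (((p : O p v hv) * z : O p v hv) : K) := by
      push_cast
      rw [hv.map_mul]
      exact le_add_of_nonneg_right z.2
    have h3 : min (v (y : K)) (v (p : K)) ≤ v (y' : K) :=
      le_trans (min_le_min le_rfl h2) h1
    exact le_min h3 (min_le_right _ _)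
  exact le_antisymm (aux _ _ h) (aux _ _ h.symm)

theorem vterm_indep (hv : ValAx p K v) (x : tilt p v hv) (s : ℕ) {y : O p v hv}
    (h : Ideal.Quotient.mk (pIdeal p v hv) y = x.val s) :
    vterm hv x s = ((((p : ℝ) ^ s : ℝ)) : WithTop ℝ) * min (v (y : K)) (v (p : K)) := by
  unfold vterm
  rw [min_indep hv (show Ideal.Quotient.mk (pIdeal p v hv) (liftO hv (x.val s))
    = Ideal.Quotient.mk (pIdeal p v hv) y from (mk_liftO hv _).trans h.symm)]

theorem real_min_scale {w π : ℝ} (hπ0 : 0 ≤ π) (hp0 : (0:ℝ) ≤ (p:ℝ)) :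
    (p : ℝ) * min w π = min ((p : ℝ) * w) ((p : ℝ) * π) := by
  rcases le_total w π with h | h
  · rw [min_eq_left h, min_eq_left (by nlinarith)]
  · rw [min_eq_right h, min_eq_right (by nlinarith)]

theorem vterm_le_succ (hv : ValAx p K v) (x : tilt p v hv) (s : ℕ) :
    vterm hv x s ≤ vterm hv x (s + 1) := by
  obtain ⟨π, hπ, hπ0⟩ := exists_vp_real hv
  have hp1 : (1 : ℝ) ≤ (p : ℝ) := by exact_mod_cast hp.out.one_lt.le
  have hp0 : (0 : ℝ) ≤ (p : ℝ) := by positivity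
  set L : O p v hv := liftO hv (x.val (s + 1)) with hL
  have hyp : Ideal.Quotient.mk (pIdeal p v hv) (L ^ p) = x.val s := by
    rw [map_pow, hL, mk_liftO, tilt_rel]
  have hLp : ((L ^ p : O p v hv) : K) = (L : K) ^ p := by push_cast; ring
  have hlhs : vterm hv x s
      = ((((p : ℝ) ^ s : ℝ)) : WithTop ℝ) * min (v ((L : K) ^ p)) (v (p : K)) := by
    rw [vterm_indep hv x s hyp, hLp]
  have hrhs : vterm hv x (s + 1)
      = ((((p : ℝ) ^ (s + 1) : ℝ)) : WithTop ℝ) * min (v (L : K)) (v (p : K)) := rfl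
  rw [hlhs, hrhs, hπ]
  rcases eq_or_ne (L : K) 0 with h0 | h0
  · rw [h0, zero_pow hp.out.ne_zero, v_zero_eq_top hv,
      min_eq_right (le_top : (π : WithTop ℝ) ≤ ⊤), ← WithTop.coe_mul, ← WithTop.coe_mul,
      WithTop.coe_le_coe]
    have hps : (p : ℝ) ^ s ≤ (p : ℝ) ^ (s + 1) := pow_le_pow_right₀ hp1 (Nat.le_succ s)
    nlinarith [pow_nonneg hp0 s]
  · obtain ⟨w, hw⟩ := exists_v_real hv h0
    have hw0 : 0 ≤ w := by
      have h5 : (0 : WithTop ℝ) ≤ v (L : K) := L.2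
      rw [hw] at h5
      exact_mod_cast h5
    rw [hw, v_pow_real hv hw p, ← WithTop.coe_min, ← WithTop.coe_min, ← WithTop.coe_mul,
      ← WithTop.coe_mul, WithTop.coe_le_coe]
    have h7 : min ((p : ℝ) * w) π ≤ (p : ℝ) * min w π := by
      rw [real_min_scale hπ0.le hp0]
      exact min_le_min le_rfl (le_mul_of_one_le_left hπ0.le hp1)
    calc (p : ℝ) ^ s * min ((p : ℝ) * w) π
        ≤ (p : ℝ) ^ s * ((p : ℝ) * min w π) :=
          mul_le_mul_of_nonneg_left h7 (pow_nonneg hp0 s)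
      _ = (p : ℝ) ^ (s + 1) * min w π := by ring

theorem vterm_mono (hv : ValAx p K v) (x : tilt p v hv) : Monotone (vterm hv x) :=
  monotone_nat_of_le_succ (vterm_le_succ hv x)

theorem vterm_le_vR (hv : ValAx p K v) (x : tilt p v hv) (s : ℕ) :
    vterm hv x s ≤ vR p v hv x := by
  rw [vR_eq_iSup]
  exact le_ciSup (OrderTop.bddAbove _) s

theorem lt_vR_iff (hv : ValAx p K v) (x : tilt p v hv) (c : WithTop ℝ) :
    c < vR p v hv x ↔ ∃ s, c < vterm hv x s := by
  rw [vR_eq_iSup]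
  constructor
  · intro h
    by_contra hn
    push_neg at hn
    exact absurd (ciSup_le hn) (not_le.mpr h)
  · rintro ⟨s, hs⟩
    exact lt_of_lt_of_le hs (le_ciSup (OrderTop.bddAbove _) s)

/-- The shift (inverse Frobenius) on the tilt. -/
def shiftT (hv : ValAx p K v) (x : tilt p v hv) : tilt p v hv :=
  ⟨fun s => x.val (s + 1), fun s => x.2 (s + 1)⟩

theorem shiftT_pow (hv : ValAx p K v) (x : tilt p v hv) : (shiftT hv x) ^ p = x := by
  apply Subtype.ext
  have h1 : ((shiftT hv x ^ p : tilt p v hv) : ℕ → O p v hv ⧸ pIdeal p v hv)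
      = ((shiftT hv x : ℕ → O p v hv ⧸ pIdeal p v hv)) ^ p := SubmonoidClass.coe_pow _ _
  rw [h1]
  funext s
  exact x.2 s

theorem coe_lt_of_coe_mul_lt {r cz : ℝ} (hr : 0 < r) {b : WithTop ℝ}
    (h : ((r * cz : ℝ) : WithTop ℝ) < (r : WithTop ℝ) * b) : (cz : WithTop ℝ) < b := by
  induction b using WithTop.recTopCoe with
  | top => exact WithTop.coe_lt_top _
  | coe b =>
      rw [← WithTop.coe_mul, WithTop.coe_lt_coe] at h
      exact WithTop.coe_lt_coe.mpr (by nlinarith)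

theorem vterm_shift (hv : ValAx p K v) (x : tilt p v hv) (s : ℕ) :
    vterm hv x (s + 1) = ((p : ℝ) : WithTop ℝ) * vterm hv (shiftT hv x) s := by
  have heq : Ideal.Quotient.mk (pIdeal p v hv) (liftO hv (x.val (s + 1)))
      = Ideal.Quotient.mk (pIdeal p v hv) (liftO hv ((shiftT hv x).val s)) := by
    rw [mk_liftO, mk_liftO]
    rfl
  unfold vterm
  rw [min_indep hv heq, ← mul_assoc, ← WithTop.coe_mul]
  congr 2
  ring

theorem vR_shift_gt (hv : ValAx p K v) {x : tilt p v hv} {c : ℝ} (hc : 0 ≤ c)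
    (h : (((p : ℝ) * c : ℝ) : WithTop ℝ) < vR p v hv x) :
    (c : WithTop ℝ) < vR p v hv (shiftT hv x) := by
  have hp0 : (0 : ℝ) < (p : ℝ) := by exact_mod_cast hp.out.pos
  rw [lt_vR_iff] at h ⊢
  obtain ⟨j, hj⟩ := h
  have h1 : 1 ≤ max j 1 := le_max_right _ _
  have hj' : (((p : ℝ) * c : ℝ) : WithTop ℝ) < vterm hv x (max j 1) :=
    lt_of_lt_of_le hj (vterm_mono hv x (le_max_left _ _))
  refine ⟨max j 1 - 1, ?_⟩
  have hrw : max j 1 = (max j 1 - 1) + 1 := by omega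
  rw [hrw, vterm_shift hv x] at hj'
  exact coe_lt_of_coe_mul_lt hp0 hj'

theorem charP_tilt (hv : ValAx p K v) : CharP (tilt p v hv) p := by
  haveI := charP_quotient hv
  haveI : Nontrivial (O p v hv ⧸ pIdeal p v hv) := Ideal.Quotient.nontrivial_iff.mpr (pIdeal_ne_top hv)
  haveI : Nontrivial (tilt p v hv) := by
    refine ⟨1, 0, fun h => ?_⟩
    have h0 := congrArg (fun z : tilt p v hv => (z : ℕ → O p v hv ⧸ pIdeal p v hv) 0) h
    simp only [OneMemClass.coe_one, ZeroMemClass.coe_zero, Pi.one_apply, Pi.zero_apply] at h0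
    exact one_ne_zero h0
  rw [CharP.charP_iff_prime_eq_zero hp.out]
  apply Subtype.ext
  have h1 : ((p : tilt p v hv) : ℕ → O p v hv ⧸ pIdeal p v hv)
      = ((p : ℕ → O p v hv ⧸ pIdeal p v hv)) := by push_cast; rfl
  rw [h1]
  funext s
  simp only [Pi.natCast_apply, ZeroMemClass.coe_zero, Pi.zero_apply]
  exact CharP.cast_eq_zero _ p

theorem frobA_surj [IsAlgClosed K] (hv : ValAx p K v) (a : O p v hv ⧸ pIdeal p v hv) :
    ∃ b : O p v hv ⧸ pIdeal p v hv, b ^ p = a := by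
  obtain ⟨y, hy⟩ := Ideal.Quotient.mk_surjective a
  obtain ⟨r, hr⟩ := exists_pow_root hv y hp.out.pos
  exact ⟨Ideal.Quotient.mk _ r, by rw [← map_pow, hr, hy]⟩

theorem theta_surj [IsAlgClosed K] (hv : ValAx p K v) (s : ℕ) :
    Function.Surjective (theta p v hv s) := by
  classical
  choose root hroot using frobA_surj (hv := hv)
  intro a
  set g : ℕ → O p v hv ⧸ pIdeal p v hv :=
    fun j => if j ≤ s then a ^ (p ^ (s - j)) else root^[j - s] a with hg
  have hrel : ∀ j : ℕ, g (j + 1) ^ p = g j := by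
    intro j
    by_cases h1 : j + 1 ≤ s
    · rw [hg]
      simp only [if_pos h1, if_pos (by omega : j ≤ s)]
      rw [← pow_mul, ← pow_succ, show s - (j + 1) + 1 = s - j by omega]
    · by_cases h2 : j ≤ s
      · have hjs : j = s := by omega
        subst hjs
        rw [hg]
        simp only [if_neg h1, if_pos le_rfl]
        have h3 : j + 1 - j = 1 := by omega
        rw [h3, Function.iterate_one, hroot, Nat.sub_self, pow_zero, pow_one]
      · rw [hg]
        simp only [if_neg h1, if_neg h2]
        have h3 : j + 1 - s = (j - s) + 1 := by omega
        rw [h3, Function.iterate_succ_apply', hroot]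
  refine ⟨⟨g, hrel⟩, ?_⟩
  rw [theta_apply]
  show g s = a
  rw [hg]
  simp

end TiltLemmas


section WittInterface

variable {p : ℕ} [hp : Fact p.Prime] {A B : Type*} [CommRing A] [CommRing B]

theorem truncMap_truncate (n : ℕ) (f : A →+* B) (x : WittVector p A) :
    truncMap p n f (WittVector.truncate n x)
      = WittVector.truncate n (WittVector.map f x) :=
  RingHom.liftOfRightInverse_comp_apply _ _ _ _ x

theorem truncMap_coeff (n : ℕ) (f : A →+* B) (w : TruncatedWittVector p n A) (i : Fin n) :
    (truncMap p n f w).coeff i = f (w.coeff i) := by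
  conv_lhs => rw [← TiltAux.truncate_out' w]
  rw [truncMap_truncate, WittVector.coeff_truncate, WittVector.map_coeff,
    TruncatedWittVector.coeff_out]

theorem truncTeichmuller_mul_coeff (n : ℕ) (a : A) (z : TruncatedWittVector p n A) (i : Fin n) :
    (truncTeichmuller p n a * z).coeff i = a ^ p ^ (i : ℕ) * z.coeff i := by
  conv_lhs => rw [← TiltAux.truncate_out' z]
  rw [truncTeichmuller, ← map_mul, WittVector.coeff_truncate,
    TiltAux.teichmuller_mul_coeff, TruncatedWittVector.coeff_out]

theorem truncTeichmuller_mul (n : ℕ) (a b : A) :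
    truncTeichmuller p n (a * b) = truncTeichmuller p n a * truncTeichmuller p n b := by
  rw [truncTeichmuller, truncTeichmuller, truncTeichmuller,
    map_mul (WittVector.teichmuller p), map_mul]

theorem truncMap_truncTeichmuller (n : ℕ) (f : A →+* B) (a : A) :
    truncMap p n f (truncTeichmuller p n a) = truncTeichmuller p n (f a) := by
  rw [truncTeichmuller, truncMap_truncate, WittVector.map_teichmuller, truncTeichmuller]

theorem truncTeichmuller_zero (n : ℕ) : truncTeichmuller p n (0 : A) = 0 := by
  rw [truncTeichmuller, WittVector.teichmuller_zero, map_zero]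

theorem truncMap_surjective (n : ℕ) (f : A →+* B) (hf : Function.Surjective f) :
    Function.Surjective (truncMap p n f) := by
  intro w
  choose g hg using fun i : Fin n => hf (w.coeff i)
  refine ⟨TruncatedWittVector.mk p g, ?_⟩
  apply TruncatedWittVector.ext
  intro i
  rw [truncMap_coeff, TruncatedWittVector.coeff_mk, hg]

end WittInterface

section JLemmas

variable {p : ℕ} [hp : Fact p.Prime] {K : Type*} [Field K] [IsAlgClosed K]
  {v : K → WithTop ℝ}

theorem mem_wittOIdeal_structure (hv : ValAx p K v) (n : ℕ) {t : ℝ} (ht : 0 ≤ t)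
    {w : TruncatedWittVector p n (O p v hv ⧸ pIdeal p v hv)} (hw : w ∈ wittOIdeal p v n hv t) :
    ∃ (μ : O p v hv) (z : TruncatedWittVector p n (O p v hv ⧸ pIdeal p v hv)),
      (t : WithTop ℝ) < v (μ : K) ∧
      w = truncTeichmuller p n (Ideal.Quotient.mk (pIdeal p v hv) μ) * z := by
  refine Submodule.span_induction ?_ ?_ ?_ ?_ hw
  · rintro z ⟨y, hy, rfl⟩
    exact ⟨y, 1, hy, (mul_one _).symm⟩
  · obtain ⟨μ, hμ1, _⟩ := exists_val_between hv ht (WithTop.coe_lt_top t)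
    exact ⟨μ, 0, hμ1, by rw [mul_zero]⟩
  · rintro x y _ _ ⟨μ, z, hμ, rfl⟩ ⟨μ', z', hμ', rfl⟩
    obtain ⟨ν, hν1, hν2⟩ := exists_val_between hv ht (lt_min hμ hμ')
    obtain ⟨q, hq⟩ := exists_factor hv ν μ (le_trans hν2 (min_le_left _ _))
    obtain ⟨q', hq'⟩ := exists_factor hv ν μ' (le_trans hν2 (min_le_right _ _))
    refine ⟨ν, truncTeichmuller p n (Ideal.Quotient.mk (pIdeal p v hv) q) * z
      + truncTeichmuller p n (Ideal.Quotient.mk (pIdeal p v hv) q') * z', hν1, ?_⟩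
    rw [hq, hq', map_mul, map_mul, truncTeichmuller_mul, truncTeichmuller_mul]
    ring
  · rintro r x _ ⟨μ, z, hμ, rfl⟩
    exact ⟨μ, r * z, hμ, by rw [smul_eq_mul]; ring⟩

theorem wittOIdeal_coeff (hv : ValAx p K v) (n : ℕ) {t : ℝ} (ht : 0 ≤ t)
    {w : TruncatedWittVector p n (O p v hv ⧸ pIdeal p v hv)} (hw : w ∈ wittOIdeal p v n hv t)
    (i : Fin n) :
    ∃ y : O p v hv, (((p : ℝ) ^ (i : ℕ) * t : ℝ) : WithTop ℝ) < v (y : K) ∧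
      Ideal.Quotient.mk (pIdeal p v hv) y = w.coeff i := by
  obtain ⟨μ, z, hμ, rfl⟩ := mem_wittOIdeal_structure hv n ht hw
  obtain ⟨g, hg⟩ := Ideal.Quotient.mk_surjective (z.coeff i)
  have hp0 : (0 : ℝ) < (p : ℝ) := by exact_mod_cast hp.out.pos
  refine ⟨μ ^ p ^ (i : ℕ) * g, ?_, ?_⟩
  · have hco : ((μ ^ p ^ (i : ℕ) * g : O p v hv) : K) = (μ : K) ^ p ^ (i : ℕ) * (g : K) := by
      push_cast; ring
    rw [hco, hv.map_mul]
    rcases eq_or_ne (μ : K) 0 with h0 | h0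
    · rw [h0, zero_pow (pow_ne_zero _ hp.out.ne_zero), v_zero_eq_top hv]
      rw [top_add]
      exact WithTop.coe_lt_top _
    · obtain ⟨wμ, hwμ⟩ := exists_v_real hv h0
      have htw : t < wμ := by rw [hwμ] at hμ; exact_mod_cast hμ
      rw [v_pow_real hv hwμ (p ^ (i : ℕ))]
      refine lt_of_lt_of_le ?_ (le_add_of_nonneg_right g.2)
      rw [WithTop.coe_lt_coe]
      have hpi : (0 : ℝ) < (p : ℝ) ^ (i : ℕ) := by positivity
      have hcast : ((p ^ (i : ℕ) : ℕ) : ℝ) = (p : ℝ) ^ (i : ℕ) := by push_cast; ring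
      rw [hcast]
      exact mul_lt_mul_of_pos_left htw hpi
  · rw [map_mul, map_pow, hg, truncTeichmuller_mul_coeff]

theorem coeff_wittOIdeal (hv : ValAx p K v) (n : ℕ) {t : ℝ} (ht : 0 ≤ t)
    (w : TruncatedWittVector p n (O p v hv ⧸ pIdeal p v hv))
    (h : ∀ i : Fin n, ∃ y : O p v hv, (((p : ℝ) ^ (i : ℕ) * t : ℝ) : WithTop ℝ) < v (y : K) ∧
      Ideal.Quotient.mk (pIdeal p v hv) y = w.coeff i) :
    w ∈ wittOIdeal p v n hv t := by
  haveI := charP_quotient hv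
  have hp0 : (0 : ℝ) < (p : ℝ) := by exact_mod_cast hp.out.pos
  have key := TiltAux.truncate_mem_span_teichmuller
    (T := fun u => {a : O p v hv ⧸ pIdeal p v hv |
      ∃ y : O p v hv, (u : WithTop ℝ) < v (y : K) ∧ Ideal.Quotient.mk (pIdeal p v hv) y = a})
    t ht ?_ n t le_rfl w.out ?_
  · rw [TiltAux.truncate_out'] at key
    have hset : {z : TruncatedWittVector p n (O p v hv ⧸ pIdeal p v hv) |
        ∃ a ∈ {a : O p v hv ⧸ pIdeal p v hv | ∃ y : O p v hv,
          (t : WithTop ℝ) < v (y : K) ∧ Ideal.Quotient.mk (pIdeal p v hv) y = a},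
          z = WittVector.truncate n (WittVector.teichmuller p a)}
        = {z | ∃ y : O p v hv, (t : WithTop ℝ) < v (y : K) ∧
            z = truncTeichmuller p n (Ideal.Quotient.mk (pIdeal p v hv) y)} := by
      ext z
      constructor
      · rintro ⟨a, ⟨y, hy, rfl⟩, rfl⟩
        exact ⟨y, hy, rfl⟩
      · rintro ⟨y, hy, rfl⟩
        exact ⟨Ideal.Quotient.mk (pIdeal p v hv) y, ⟨y, hy, rfl⟩, rfl⟩
    rw [hset] at key
    exact key
  · rintro u hu a ⟨y, hy, rfl⟩
    obtain ⟨r, hr⟩ := exists_pow_root hv y hp.out.pos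
    refine ⟨Ideal.Quotient.mk (pIdeal p v hv) r, ⟨r, ?_, rfl⟩, by rw [← map_pow, hr]⟩
    rcases eq_or_ne (y : K) 0 with h0 | h0
    · have hr0 : (r : K) = 0 := by
        have h1 : (r : K) ^ p = 0 := by
          have h2 := congrArg (fun z : O p v hv => (z : K)) hr
          push_cast at h2
          rw [h2, h0]
        exact pow_eq_zero_iff hp.out.ne_zero |>.mp h1
      rw [hr0, v_zero_eq_top hv]
      exact WithTop.coe_lt_top _
    · have hr0 : (r : K) ≠ 0 := by
        intro h1
        apply h0
        have h2 := congrArg (fun z : O p v hv => (z : K)) hr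
        push_cast at h2
        rw [← h2, h1, zero_pow hp.out.ne_zero]
      obtain ⟨wr, hwr⟩ := exists_v_real hv hr0
      have h3 : v ((y : K)) = (((p : ℝ) * wr : ℝ) : WithTop ℝ) := by
        have h2 := congrArg (fun z : O p v hv => (z : K)) hr
        push_cast at h2
        rw [← h2, v_pow_real hv hwr p]
      rw [h3] at hy
      rw [hwr, WithTop.coe_lt_coe]
      have h4 : (p : ℝ) * u < (p : ℝ) * wr := by exact_mod_cast hy
      exact lt_of_mul_lt_mul_left h4 hp0.le
  · intro i hi
    obtain ⟨y, hy, hmk⟩ := h ⟨i, hi⟩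
    refine ⟨y, hy, ?_⟩
    rw [hmk, ← TruncatedWittVector.coeff_out w ⟨i, hi⟩]

theorem coeff_wittTiltIdeal (hv : ValAx p K v) (n : ℕ) {c : ℝ} (hc : 0 < c)
    (x : TruncatedWittVector p n (tilt p v hv))
    (h : ∀ i : Fin n, (((p : ℝ) ^ (i : ℕ) * c : ℝ) : WithTop ℝ) < vR p v hv (x.coeff i)) :
    x ∈ wittTiltIdeal p v n hv c := by
  haveI := charP_tilt hv
  have key := TiltAux.truncate_mem_span_teichmuller
    (T := fun u => {a : tilt p v hv | (u : WithTop ℝ) < vR p v hv a})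
    c hc.le ?_ n c le_rfl x.out ?_
  · rw [TiltAux.truncate_out'] at key
    have hset : {z : TruncatedWittVector p n (tilt p v hv) |
        ∃ a ∈ {a : tilt p v hv | (c : WithTop ℝ) < vR p v hv a},
          z = WittVector.truncate n (WittVector.teichmuller p a)}
        = {z | ∃ a : tilt p v hv, (c : WithTop ℝ) < vR p v hv a ∧
            z = truncTeichmuller p n a} := by
      ext z
      constructor
      · rintro ⟨a, ha, rfl⟩
        exact ⟨a, ha, rfl⟩
      · rintro ⟨a, ha, rfl⟩
        exact ⟨a, ha, rfl⟩
    rw [hset] at key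
    exact key
  · rintro u hu a ha
    refine ⟨shiftT hv a, ?_, shiftT_pow hv a⟩
    exact vR_shift_gt hv (le_trans hc.le hu) ha
  · intro i hi
    have := h ⟨i, hi⟩
    rw [← TruncatedWittVector.coeff_out x ⟨i, hi⟩] at this
    exact this

end JLemmas

/-- For `n ≥ 1` and `p^{s-n+1}·v(p) > c` (i.e.
`p^{n-1}·c < p^s·v(p)`), the composite
`W_n(R) → W_n(O/p) → W_n(O/p)/J` induced by `θ_s` is surjective with kernel
`[𝔞_R^{>c}]`; hence it induces a ring isomorphism `W_n(R)/[𝔞_R^{>c}] ≅ W_n(O/p)/J`. -/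
theorem truncMap_theta_surjective_and_ker (K : Type*) [Field K] [IsAlgClosed K]
    (p : ℕ) [Fact p.Prime] (v : K → WithTop ℝ) (hv : ValAx p K v)
    (c : ℝ) (hc : 0 < c) (n s : ℕ) (hn : 1 ≤ n)
    (hs : (((p : ℝ) ^ (n - 1) * c : ℝ) : WithTop ℝ) <
      (((p : ℝ) ^ s : ℝ) : WithTop ℝ) * v (p : K)) :
    Function.Surjective
      ((Ideal.Quotient.mk (wittOIdeal p v n hv (c / p ^ s))).comp
        (truncMap p n (theta p v hv s))) ∧
    RingHom.ker
      ((Ideal.Quotient.mk (wittOIdeal p v n hv (c / p ^ s))).comp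
        (truncMap p n (theta p v hv s))) = wittTiltIdeal p v n hv c ∧
    Nonempty
      ((TruncatedWittVector p n (tilt p v hv) ⧸ wittTiltIdeal p v n hv c) ≃+*
        (TruncatedWittVector p n (O p v hv ⧸ pIdeal p v hv) ⧸
          wittOIdeal p v n hv (c / p ^ s))) := by
  haveI := charP_quotient hv
  obtain ⟨π, hπ, hπ0⟩ := exists_vp_real hv
  have hp0 : (0 : ℝ) < (p : ℝ) := by exact_mod_cast (Fact.out (p := p.Prime)).pos
  have hp1 : (1 : ℝ) ≤ (p : ℝ) := by exact_mod_cast (Fact.out (p := p.Prime)).one_lt.le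
  have hps : (0 : ℝ) < (p : ℝ) ^ s := by positivity
  have ht : 0 ≤ c / (p : ℝ) ^ s := by positivity
  have hsr : (p : ℝ) ^ (n - 1) * c < (p : ℝ) ^ s * π := by
    rw [hπ, ← WithTop.coe_mul, WithTop.coe_lt_coe] at hs
    exact hs
  have hsurj : Function.Surjective ((Ideal.Quotient.mk (wittOIdeal p v n hv (c / p ^ s))).comp
      (truncMap p n (theta p v hv s))) := by
    rw [RingHom.coe_comp]
    exact Ideal.Quotient.mk_surjective.comp (truncMap_surjective n _ (theta_surj hv s))
  have hker : RingHom.ker ((Ideal.Quotient.mk (wittOIdeal p v n hv (c / p ^ s))).comp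
      (truncMap p n (theta p v hv s))) = wittTiltIdeal p v n hv c := by
    apply le_antisymm
    · intro x hx
      rw [RingHom.mem_ker, RingHom.comp_apply, Ideal.Quotient.eq_zero_iff_mem] at hx
      apply coeff_wittTiltIdeal hv n hc x
      intro i
      obtain ⟨y, hy, hmk⟩ := wittOIdeal_coeff hv n ht hx i
      rw [truncMap_coeff] at hmk
      have hterm : vterm hv (x.coeff i) s
          = ((((p : ℝ) ^ s : ℝ)) : WithTop ℝ) * min (v (y : K)) (v (p : K)) :=
        vterm_indep hv _ s hmk
      refine lt_of_lt_of_le ?_ (vterm_le_vR hv (x.coeff i) s)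
      rw [hterm, hπ]
      have hic : (p : ℝ) ^ (i : ℕ) * c ≤ (p : ℝ) ^ (n - 1) * c :=
        mul_le_mul_of_nonneg_right
          (pow_le_pow_right₀ hp1 (by have := i.2; omega : (i : ℕ) ≤ n - 1)) hc.le
      rcases eq_or_ne (y : K) 0 with h0 | h0
      · rw [h0, v_zero_eq_top hv, min_eq_right le_top, ← WithTop.coe_mul, WithTop.coe_lt_coe]
        linarith
      · obtain ⟨wy, hwy⟩ := exists_v_real hv h0
        have hwy' : (p : ℝ) ^ (i : ℕ) * (c / (p : ℝ) ^ s) < wy := by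
          rw [hwy] at hy; exact_mod_cast hy
        have h1 : (p : ℝ) ^ (i : ℕ) * c < (p : ℝ) ^ s * wy := by
          have h2 := mul_lt_mul_of_pos_left hwy' hps
          have h3 : (p : ℝ) ^ s * ((p : ℝ) ^ (i : ℕ) * (c / (p : ℝ) ^ s))
              = (p : ℝ) ^ (i : ℕ) * c := by
            field_simp
          rw [h3] at h2
          exact h2
        rw [hwy, ← WithTop.coe_min, ← WithTop.coe_mul, WithTop.coe_lt_coe]
        rcases le_total wy π with h4 | h4
        · rw [min_eq_left h4]; exact h1
        · rw [min_eq_right h4]; linarith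
    · rw [wittTiltIdeal, Ideal.span_le]
      rintro z ⟨x, hx, rfl⟩
      simp only [SetLike.mem_coe, RingHom.mem_ker, RingHom.comp_apply]
      rw [truncMap_truncTeichmuller, Ideal.Quotient.eq_zero_iff_mem]
      rw [lt_vR_iff] at hx
      obtain ⟨j0, hj0⟩ := hx
      set j := max j0 s with hjdef
      have hjs : s ≤ j := le_max_right _ _
      have hj : (c : WithTop ℝ) < vterm hv x j :=
        lt_of_lt_of_le hj0 (vterm_mono hv x (le_max_left _ _))
      set L := liftO hv (x.val j) with hLdef
      have hmkL : Ideal.Quotient.mk (pIdeal p v hv) L = x.val j := by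
        rw [hLdef]; exact mk_liftO hv _
      rcases le_or_gt (v ((p : K))) (v (L : K)) with hge | hlt
      · obtain ⟨q, hq⟩ := exists_factor hv (p : O p v hv) L hge
        have hL0 : x.val j = 0 := by
          rw [← hmkL, hq, map_mul]
          have hpm : Ideal.Quotient.mk (pIdeal p v hv) (p : O p v hv) = 0 :=
            Ideal.Quotient.eq_zero_iff_mem.mpr (Ideal.mem_span_singleton_self _)
          rw [hpm, zero_mul]
        have hxs : theta p v hv s x = 0 := by
          rw [theta_apply, ← tilt_pow_proj hv x hjs, hL0,
            zero_pow (pow_ne_zero _ (Fact.out (p := p.Prime)).ne_zero)]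
        rw [hxs, truncTeichmuller_zero]
        exact Ideal.zero_mem _
      · have hL0K : (L : K) ≠ 0 := by
          intro h0
          rw [h0, v_zero_eq_top hv] at hlt
          exact not_top_lt hlt
        obtain ⟨wL, hwL⟩ := exists_v_real hv hL0K
        have hterm : vterm hv x j = ((((p : ℝ) ^ j * wL : ℝ)) : WithTop ℝ) := by
          rw [vterm_indep hv x j hmkL, hwL, min_eq_left (by rw [← hwL]; exact hlt.le),
            ← WithTop.coe_mul]
        have hcw : c < (p : ℝ) ^ j * wL := by
          rw [hterm] at hj; exact_mod_cast hj
        refine Ideal.subset_span ⟨L ^ (p ^ (j - s)), ?_, ?_⟩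
        · have hco : ((L ^ (p ^ (j - s)) : O p v hv) : K) = (L : K) ^ (p ^ (j - s)) := by
            push_cast; ring
          rw [hco, v_pow_real hv hwL (p ^ (j - s)), WithTop.coe_lt_coe]
          have hcast : ((p ^ (j - s) : ℕ) : ℝ) = (p : ℝ) ^ (j - s) := by push_cast; ring
          rw [hcast, div_lt_iff₀ hps]
          calc c < (p : ℝ) ^ j * wL := hcw
            _ = (p : ℝ) ^ (j - s) * wL * (p : ℝ) ^ s := by
                rw [show (p : ℝ) ^ j = (p : ℝ) ^ (j - s) * (p : ℝ) ^ s by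
                  rw [← pow_add]; congr 1; omega]
                ring
        · have heq : Ideal.Quotient.mk (pIdeal p v hv) (L ^ (p ^ (j - s)))
              = theta p v hv s x := by
            rw [map_pow, hmkL, theta_apply]
            exact tilt_pow_proj hv x hjs
          exact (congrArg (truncTeichmuller p n) heq).symm
  exact ⟨hsurj, hker, ⟨(Ideal.quotEquivOfEq hker.symm).trans
    (RingHom.quotientKerEquivOfSurjective hsurj)⟩⟩

end Tilt
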